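/- Let A, B be real symmetric 3×3 matrices with det A ≠ 0. If α_{ik}α_{jl} − α_{il}α_{jk} = β_{ik}β_{jl} − β_{il}β_{jk} for all i,j,k,l ∈ {1,2,3} (where α, β are the entries of A, B), then B = A or B = −A. -/
import Mathlib


open Matrix

theorem gauss_solution_unique_up_to_sign (A B : Matrix (Fin 3) (Fin 3) ℝ)
    (hA : A.IsSymm) (hB : B.IsSymm) (hdet : A.det ≠ 0)
    (h : ∀ i j k l, A i k * A j l - A i l * A j k = B i k * B j l - B i l * B j k) :
    B = A ∨ B = -A := by
  have hadj : adjugate A = adjugate B := by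
    ext i j
    fin_cases i <;> fin_cases j <;>
      simp [adjugate_fin_three] <;>
      linarith [h 1 2 1 2, h 0 2 1 2, h 0 1 1 2, h 1 2 0 2, h 0 2 0 2,
        h 0 1 0 2, h 1 2 0 1, h 0 2 0 1, h 0 1 0 1]
  have hdet2 : A.det ^ 2 = B.det ^ 2 := by
    have := congrArg Matrix.det hadj
    rwa [det_adjugate, det_adjugate] at this
  have key : A.det • A = B.det • B := by
    have h1 := adjugate_adjugate A (by simp)
    have h2 := adjugate_adjugate B (by simp)
    simp only [Fintype.card_fin] at h1 h2
    norm_num at h1 h2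
    rw [← h1, ← h2, hadj]
  have hcases : B.det = A.det ∨ B.det = -A.det := by
    have : (B.det - A.det) * (B.det + A.det) = 0 := by ring_nf; nlinarith [hdet2]
    rcases mul_eq_zero.mp this with h'|h'
    · left; linarith
    · right; linarith
  rcases hcases with h'|h'
  · left
    rw [h'] at key
    exact (smul_right_injective (Matrix (Fin 3) (Fin 3) ℝ) hdet key).symm
  · right
    rw [h', neg_smul, ← smul_neg] at key
    have := smul_right_injective (Matrix (Fin 3) (Fin 3) ℝ) hdet key
    rw [this, neg_neg]
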